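/- Let A be a finite set and let F be a nonempty set of conservative binary operations on A that is closed under the superposition (a, b) ↦ ((x, y) ↦ a (b x y) (b y x)). Then there exists f_max ∈ F such that Com(f_max) = ⋃_{f ∈ F} Com(f); in particular, Com(f) ⊆ Com(f_max) for every f ∈ F. -/

import Mathlib

/-- A binary operation is conservative if it always returns one of its
arguments. -/
def Conservative2 {A : Type*} (f : A → A → A) : Prop :=
  ∀ x y : A, f x y = x ∨ f x y = y

/-- `Com f` is the set of two-element subsets `{a, b}` of `A` on which `f` is
commutative. -/
def Com {A : Type*} (f : A → A → A) : Set (Set A) :=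
  {B | ∃ a b : A, a ≠ b ∧ B = ({a, b} : Set A) ∧ f a b = f b a}

lemma com_superpos {A : Type*} (a b : A → A → A) (ha : Conservative2 a)
    (hb : Conservative2 b) :
    Com a ∪ Com b ⊆ Com (fun x y => a (b x y) (b y x)) := by
  have hacc : ∀ c, a c c = c := fun c => (ha c c).elim id id
  rintro B (⟨x, y, hxy, rfl, hcomm⟩ | ⟨x, y, hxy, rfl, hcomm⟩)
  · refine ⟨x, y, hxy, rfl, ?_⟩
    rcases hb x y with h1 | h1 <;> rcases hb y x with h2 | h2 <;>
      simp only [h1, h2, hacc] <;> first | rfl | exact hcomm | exact hcomm.symm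
  · refine ⟨x, y, hxy, rfl, ?_⟩
    simp only [hcomm, hacc]

theorem exists_fmax {A : Type*} [Fintype A] (F : Set (A → A → A))
    (hcons : ∀ f ∈ F, Conservative2 f) (hne : F.Nonempty)
    (hclosed : ∀ a ∈ F, ∀ b ∈ F, (fun x y => a (b x y) (b y x)) ∈ F) :
    ∃ fmax ∈ F, Com fmax = (⋃ f ∈ F, Com f) ∧ ∀ f ∈ F, Com f ⊆ Com fmax := by
  classical
  have hT : (Com '' F).Finite := Set.toFinite _
  have hTne : (Com '' F).Nonempty := hne.image _
  obtain ⟨m, hmT, hmax⟩ : ∃ m ∈ Com '' F, ∀ m' ∈ Com '' F, m ⊆ m' → m = m' := by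
    obtain ⟨m, hm⟩ := hT.exists_maximal hTne
    exact ⟨m, hm.1, fun m' hm' h => le_antisymm h (hm.2 hm' h)⟩
  obtain ⟨fmax, hfmaxF, hfm⟩ := hmT
  have key : ∀ f ∈ F, Com f ⊆ Com fmax := by
    intro f hf
    have hg := hclosed fmax hfmaxF f hf
    have hsub := com_superpos fmax f (hcons _ hfmaxF) (hcons _ hf)
    have hmem : Com (fun x y => fmax (f x y) (f y x)) ∈ Com '' F := ⟨_, hg, rfl⟩
    have hle : m ⊆ Com (fun x y => fmax (f x y) (f y x)) := by
      rw [← hfm]; exact fun B hB => hsub (Set.mem_union_left _ hB)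
    have heq : m = Com (fun x y => fmax (f x y) (f y x)) := hmax _ hmem hle
    rw [hfm, heq]
    exact fun B hB => hsub (Set.mem_union_right _ hB)
  refine ⟨fmax, hfmaxF, ?_, key⟩
  apply Set.Subset.antisymm
  · exact Set.subset_biUnion_of_mem hfmaxF
  · exact Set.iUnion₂_subset key
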